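/- For any symmetric polynomial F in n variables, the element F(J_1,...,J_n) lies in the center of the group algebra Z[S_n]. -/

import Mathlib

open Finset
open scoped Classical

/-- The Jucys-Murphy element `J_i = Σ_{j<i} (j i)` in the group algebra `ℤ[S_n]`. -/
noncomputable def JM (n : ℕ) (i : Fin n) : MonoidAlgebra ℤ (Equiv.Perm (Fin n)) :=
  ∑ j ∈ Finset.univ.filter (fun j : Fin n => j < i),
    MonoidAlgebra.of ℤ (Equiv.Perm (Fin n)) (Equiv.swap j i)

/-- Evaluation of a multivariate polynomial at a family of elements of a
(possibly noncommutative) ring, multiplying the variables in increasing order. -/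
noncomputable def mvEval {n : ℕ} {A : Type*} [Ring A]
    (F : MvPolynomial (Fin n) ℤ) (g : Fin n → A) : A :=
  ∑ d ∈ F.support, F.coeff d • ((List.finRange n).map (fun i => g i ^ d i)).prod

namespace JucysAux

lemma of_comm_JM {n : ℕ} (j : Fin n) (σ : Equiv.Perm (Fin n)) (hj : σ j = j)
    (hlt : ∀ b : Fin n, σ b < j ↔ b < j) :
    MonoidAlgebra.of ℤ (Equiv.Perm (Fin n)) σ * JM n j
      = JM n j * MonoidAlgebra.of ℤ (Equiv.Perm (Fin n)) σ := by
  have key : ∀ b : Fin n, σ * Equiv.swap b j = Equiv.swap (σ b) j * σ := by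
    intro b
    have h2 := Equiv.swap_apply_apply σ b j
    rw [hj] at h2
    rw [h2]
    group
  have e : JM n j = ∑ b ∈ Finset.univ.filter (fun b : Fin n => b < j),
      MonoidAlgebra.of ℤ (Equiv.Perm (Fin n)) (Equiv.swap b j) := rfl
  rw [e, Finset.mul_sum, Finset.sum_mul]
  refine Finset.sum_bij' (fun b _ => σ b) (fun b _ => σ⁻¹ b) ?_ ?_ ?_ ?_ ?_
  · intro b hb
    simp only [Finset.mem_filter, Finset.mem_univ, true_and] at hb ⊢
    exact (hlt b).mpr hb
  · intro b hb
    simp only [Finset.mem_filter, Finset.mem_univ, true_and] at hb ⊢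
    have := hlt (σ⁻¹ b)
    rw [Equiv.Perm.inv_def, Equiv.apply_symm_apply] at this
    exact this.mp hb
  · intro b _; simp
  · intro b _; simp
  · intro b _
    rw [← map_mul, ← map_mul, key b]

lemma swap_lt {n : ℕ} {x y j : Fin n} (hx : x < j) (hy : y < j) :
    ∀ b : Fin n, Equiv.swap x y b < j ↔ b < j := by
  have fwd : ∀ b : Fin n, b < j → Equiv.swap x y b < j := by
    intro b hb
    rcases eq_or_ne b x with rfl | hbx
    · rwa [Equiv.swap_apply_left]
    rcases eq_or_ne b y with rfl | hby
    · rwa [Equiv.swap_apply_right]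
    · rwa [Equiv.swap_apply_of_ne_of_ne hbx hby]
  intro b
  constructor
  · intro hb
    have h2 := fwd _ hb
    rwa [Equiv.swap_apply_self] at h2
  · exact fwd b

lemma JM_commute {n : ℕ} (i j : Fin n) : Commute (JM n i) (JM n j) := by
  suffices H : ∀ i j : Fin n, i < j → Commute (JM n i) (JM n j) by
    rcases lt_trichotomy i j with h | rfl | h
    · exact H _ _ h
    · exact Commute.refl _
    · exact (H _ _ h).symm
  intro i j h
  have e : JM n i = ∑ a ∈ Finset.univ.filter (fun a : Fin n => a < i),
      MonoidAlgebra.of ℤ (Equiv.Perm (Fin n)) (Equiv.swap a i) := rfl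
  rw [e]
  refine Commute.sum_left _ _ _ fun a ha => ?_
  simp only [Finset.mem_filter, Finset.mem_univ, true_and] at ha
  have haj : a < j := lt_trans ha h
  exact of_comm_JM j _ (Equiv.swap_apply_of_ne_of_ne haj.ne' h.ne') (swap_lt haj h)

lemma filter_lt_succ {n : ℕ} {i k : Fin n} (hik : i < k) (hk : (k : ℕ) = (i : ℕ) + 1) :
    Finset.univ.filter (fun j : Fin n => j < k)
      = insert i (Finset.univ.filter (fun j : Fin n => j < i)) := by
  ext b
  simp only [Finset.mem_filter, Finset.mem_univ, true_and, Finset.mem_insert, Fin.lt_def,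
    Fin.ext_iff, hk]
  omega

lemma JM_k_eq {n : ℕ} {i k : Fin n} (hik : i < k) (hk : (k : ℕ) = (i : ℕ) + 1) :
    JM n k = (∑ a ∈ Finset.univ.filter (fun j : Fin n => j < i),
        MonoidAlgebra.of ℤ (Equiv.Perm (Fin n)) (Equiv.swap a k))
      + MonoidAlgebra.of ℤ (Equiv.Perm (Fin n)) (Equiv.swap i k) := by
  have e : JM n k = ∑ a ∈ Finset.univ.filter (fun j : Fin n => j < k),
      MonoidAlgebra.of ℤ (Equiv.Perm (Fin n)) (Equiv.swap a k) := rfl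
  rw [e, filter_lt_succ hik hk, Finset.sum_insert (by simp)]
  exact add_comm _ _

lemma swap_mul_swap_left {n : ℕ} {a i k : Fin n} (hai : a ≠ i) (hak : a ≠ k) :
    Equiv.swap i k * Equiv.swap a i = Equiv.swap a k * Equiv.swap i k := by
  have h := Equiv.swap_apply_apply (Equiv.swap i k) a i
  rw [Equiv.swap_apply_of_ne_of_ne hai hak, Equiv.swap_apply_left] at h
  rw [h]
  group

lemma swap_mul_swap_right {n : ℕ} {a i k : Fin n} (hai : a ≠ i) (hak : a ≠ k) :
    Equiv.swap i k * Equiv.swap a k = Equiv.swap a i * Equiv.swap i k := by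
  have h := Equiv.swap_apply_apply (Equiv.swap i k) a k
  rw [Equiv.swap_apply_of_ne_of_ne hai hak, Equiv.swap_apply_right] at h
  rw [h]
  group

lemma T_sq {n : ℕ} (i k : Fin n) :
    MonoidAlgebra.of ℤ (Equiv.Perm (Fin n)) (Equiv.swap i k)
      * MonoidAlgebra.of ℤ (Equiv.Perm (Fin n)) (Equiv.swap i k) = 1 := by
  rw [← map_mul, Equiv.swap_mul_self, map_one]

lemma T_mul_JM_i {n : ℕ} {i k : Fin n} (hik : i < k) (hk : (k : ℕ) = (i : ℕ) + 1) :
    MonoidAlgebra.of ℤ (Equiv.Perm (Fin n)) (Equiv.swap i k) * JM n i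
      = JM n k * MonoidAlgebra.of ℤ (Equiv.Perm (Fin n)) (Equiv.swap i k) - 1 := by
  have e : JM n i = ∑ a ∈ Finset.univ.filter (fun j : Fin n => j < i),
      MonoidAlgebra.of ℤ (Equiv.Perm (Fin n)) (Equiv.swap a i) := rfl
  rw [e, Finset.mul_sum]
  have step : ∀ a ∈ Finset.univ.filter (fun j : Fin n => j < i),
      MonoidAlgebra.of ℤ (Equiv.Perm (Fin n)) (Equiv.swap i k)
          * MonoidAlgebra.of ℤ (Equiv.Perm (Fin n)) (Equiv.swap a i)
        = MonoidAlgebra.of ℤ (Equiv.Perm (Fin n)) (Equiv.swap a k)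
          * MonoidAlgebra.of ℤ (Equiv.Perm (Fin n)) (Equiv.swap i k) := by
    intro a ha
    simp only [Finset.mem_filter, Finset.mem_univ, true_and] at ha
    rw [← map_mul, ← map_mul, swap_mul_swap_left ha.ne (lt_trans ha hik).ne]
  rw [Finset.sum_congr rfl step, ← Finset.sum_mul, JM_k_eq hik hk, add_mul, T_sq,
    add_sub_cancel_right]

lemma T_mul_JM_k {n : ℕ} {i k : Fin n} (hik : i < k) (hk : (k : ℕ) = (i : ℕ) + 1) :
    MonoidAlgebra.of ℤ (Equiv.Perm (Fin n)) (Equiv.swap i k) * JM n k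
      = JM n i * MonoidAlgebra.of ℤ (Equiv.Perm (Fin n)) (Equiv.swap i k) + 1 := by
  have e : JM n i = ∑ a ∈ Finset.univ.filter (fun j : Fin n => j < i),
      MonoidAlgebra.of ℤ (Equiv.Perm (Fin n)) (Equiv.swap a i) := rfl
  rw [JM_k_eq hik hk, mul_add, Finset.mul_sum, T_sq]
  have step : ∀ a ∈ Finset.univ.filter (fun j : Fin n => j < i),
      MonoidAlgebra.of ℤ (Equiv.Perm (Fin n)) (Equiv.swap i k)
          * MonoidAlgebra.of ℤ (Equiv.Perm (Fin n)) (Equiv.swap a k)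
        = MonoidAlgebra.of ℤ (Equiv.Perm (Fin n)) (Equiv.swap a i)
          * MonoidAlgebra.of ℤ (Equiv.Perm (Fin n)) (Equiv.swap i k) := by
    intro a ha
    simp only [Finset.mem_filter, Finset.mem_univ, true_and] at ha
    rw [← map_mul, ← map_mul, swap_mul_swap_right ha.ne (lt_trans ha hik).ne]
  rw [Finset.sum_congr rfl step, ← Finset.sum_mul, ← e]

lemma T_comm_JM_other {n : ℕ} {i k k' : Fin n} (hik : i < k) (hk : (k : ℕ) = (i : ℕ) + 1)
    (h1 : k' ≠ i) (h2 : k' ≠ k) :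
    MonoidAlgebra.of ℤ (Equiv.Perm (Fin n)) (Equiv.swap i k) * JM n k'
      = JM n k' * MonoidAlgebra.of ℤ (Equiv.Perm (Fin n)) (Equiv.swap i k) := by
  have h1' : (k' : ℕ) ≠ (i : ℕ) := fun h => h1 (Fin.ext h)
  have h2' : (k' : ℕ) ≠ (k : ℕ) := fun h => h2 (Fin.ext h)
  have hik' : (i : ℕ) < (k : ℕ) := hik
  apply of_comm_JM
  · exact Equiv.swap_apply_of_ne_of_ne h1 h2
  · intro b
    rcases eq_or_ne b i with rfl | hbi
    · rw [Equiv.swap_apply_left, Fin.lt_def, Fin.lt_def]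
      omega
    rcases eq_or_ne b k with rfl | hbk
    · rw [Equiv.swap_apply_right, Fin.lt_def, Fin.lt_def]
      omega
    · rw [Equiv.swap_apply_of_ne_of_ne hbi hbk]

open MvPolynomial

lemma symm_pair_mem_adjoin {N : ℕ} {a b : Fin N} (hab : a ≠ b)
    {F : MvPolynomial (Fin N) ℤ}
    (h : rename (Equiv.swap a b) F = F) :
    F ∈ Algebra.adjoin ℤ
      (({P : MvPolynomial (Fin N) ℤ | ∃ k, k ≠ a ∧ k ≠ b ∧ P = X k}
        ∪ {X a + X b, X a * X b}) : Set (MvPolynomial (Fin N) ℤ)) := by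
  classical
  set Ad := Algebra.adjoin ℤ
      (({P : MvPolynomial (Fin N) ℤ | ∃ k, k ≠ a ∧ k ≠ b ∧ P = X k}
        ∪ {X a + X b, X a * X b}) : Set (MvPolynomial (Fin N) ℤ)) with hAd
  have hsum : (X a + X b : MvPolynomial (Fin N) ℤ) ∈ Ad :=
    Algebra.subset_adjoin (Or.inr (Or.inl rfl))
  have hprod : (X a * X b : MvPolynomial (Fin N) ℤ) ∈ Ad :=
    Algebra.subset_adjoin (Or.inr (Or.inr rfl))
  have hXmem : ∀ k, k ≠ a → k ≠ b → (X k : MvPolynomial (Fin N) ℤ) ∈ Ad :=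
    fun k h1 h2 => Algebra.subset_adjoin (Or.inl ⟨k, h1, h2, rfl⟩)
  have hC : ∀ c : ℤ, (C c : MvPolynomial (Fin N) ℤ) ∈ Ad := by
    intro c
    have := Ad.algebraMap_mem c
    rwa [MvPolynomial.algebraMap_eq] at this
  have hS : ∀ m : ℕ, (X a ^ m + X b ^ m : MvPolynomial (Fin N) ℤ) ∈ Ad := by
    intro m
    induction m using Nat.strong_induction_on with
    | _ m ih =>
      match m, ih with
      | 0, _ => simpa using add_mem Ad.one_mem Ad.one_mem
      | 1, _ => simpa using hsum
      | (m+2), ih =>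
        have e : (X a : MvPolynomial (Fin N) ℤ) ^ (m+2) + X b ^ (m+2)
            = (X a + X b) * (X a ^ (m+1) + X b ^ (m+1))
              - (X a * X b) * (X a ^ m + X b ^ m) := by ring
        rw [e]
        exact sub_mem (mul_mem hsum (ih (m+1) (by omega))) (mul_mem hprod (ih m (by omega)))
  set rest : Finset (Fin N) := (Finset.univ.erase a).erase b with hrest
  have hrestmem : ∀ k ∈ rest, k ≠ a ∧ k ≠ b := by
    intro k hk
    rw [hrest] at hk
    simp only [Finset.mem_erase, Finset.mem_univ, and_true] at hk
    exact ⟨hk.2, hk.1⟩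
  have hR : ∀ d : Fin N →₀ ℕ,
      (∏ k ∈ rest, (X k : MvPolynomial (Fin N) ℤ) ^ d k) ∈ Ad := fun d =>
    prod_mem fun k hk => pow_mem (hXmem k (hrestmem k hk).1 (hrestmem k hk).2) _
  have hmono : ∀ (d : Fin N →₀ ℕ) (c : ℤ), (monomial d c : MvPolynomial (Fin N) ℤ)
      = C c * (X a ^ d a * (X b ^ d b * ∏ k ∈ rest, X k ^ d k)) := by
    intro d c
    rw [monomial_eq]
    congr 1
    rw [Finsupp.prod_fintype _ _ (fun i => pow_zero _)]
    rw [← Finset.mul_prod_erase Finset.univ _ (Finset.mem_univ a),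
      ← Finset.mul_prod_erase (Finset.univ.erase a) _
        (Finset.mem_erase.mpr ⟨hab.symm, Finset.mem_univ b⟩)]
  -- behaviour of mapDomain
  have hswap : ∀ (d : Fin N →₀ ℕ) (k : Fin N),
      Finsupp.mapDomain (⇑(Equiv.swap a b)) d k = d (Equiv.swap a b k) := by
    intro d k
    rw [Finsupp.mapDomain_equiv_apply (f := Equiv.swap a b), Equiv.symm_swap]
  have hcoeff : ∀ d : Fin N →₀ ℕ,
      coeff (Finsupp.mapDomain (⇑(Equiv.swap a b)) d) F = coeff d F := by
    intro d
    conv_lhs => rw [← h]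
    exact coeff_rename_mapDomain _ (Equiv.injective _) F d
  have hinv : ∀ d : Fin N →₀ ℕ,
      Finsupp.mapDomain (⇑(Equiv.swap a b)) (Finsupp.mapDomain (⇑(Equiv.swap a b)) d) = d := by
    intro d
    ext k
    rw [hswap, hswap, Equiv.swap_apply_self]
  -- decomposition of the support
  set s := F.support with hs
  set E := s.filter (fun d => d a = d b) with hE
  set G := s.filter (fun d => d b < d a) with hG
  set L := s.filter (fun d => d a < d b) with hL
  have h1 := Finset.sum_filter_add_sum_filter_not s (fun d => d a = d b)
      (fun d => (monomial d (coeff d F) : MvPolynomial (Fin N) ℤ))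
  have h2 := Finset.sum_filter_add_sum_filter_not (s.filter (fun d => ¬ d a = d b))
      (fun d => d b < d a) (fun d => (monomial d (coeff d F) : MvPolynomial (Fin N) ℤ))
  have hGeq : (s.filter (fun d => ¬ d a = d b)).filter (fun d => d b < d a) = G := by
    rw [Finset.filter_filter, hG]
    apply Finset.filter_congr
    intro d _
    constructor
    · rintro ⟨_, h2⟩; exact h2
    · intro h2; exact ⟨by omega, h2⟩
  have hLeq : (s.filter (fun d => ¬ d a = d b)).filter (fun d => ¬ d b < d a) = L := by
    rw [Finset.filter_filter, hL]
    apply Finset.filter_congr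
    intro d _
    constructor
    · rintro ⟨ha', hb'⟩; omega
    · intro h2; constructor <;> omega
  have hFrepr : F = (∑ d ∈ E, (monomial d (coeff d F) : MvPolynomial (Fin N) ℤ))
      + ((∑ d ∈ G, (monomial d (coeff d F) : MvPolynomial (Fin N) ℤ))
        + (∑ d ∈ L, (monomial d (coeff d F) : MvPolynomial (Fin N) ℤ))) := by
    conv_lhs => rw [← support_sum_monomial_coeff F]
    rw [← h1, ← h2, hGeq, hLeq, hE]
  -- re-index the L-sum over G
  have hLG : (∑ d ∈ L, (monomial d (coeff d F) : MvPolynomial (Fin N) ℤ))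
      = ∑ d ∈ G, (monomial (Finsupp.mapDomain (⇑(Equiv.swap a b)) d) (coeff d F)
          : MvPolynomial (Fin N) ℤ) := by
    refine Finset.sum_bij' (fun d _ => Finsupp.mapDomain (⇑(Equiv.swap a b)) d)
      (fun d _ => Finsupp.mapDomain (⇑(Equiv.swap a b)) d) ?_ ?_ ?_ ?_ ?_
    · intro d hd
      rw [hL] at hd
      rw [hG]
      simp only [Finset.mem_filter] at hd ⊢
      refine ⟨?_, ?_⟩
      · rw [hs, MvPolynomial.mem_support_iff] at hd ⊢
        rw [hcoeff]; exact hd.1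
      · rw [hswap, hswap, Equiv.swap_apply_left, Equiv.swap_apply_right]
        exact hd.2
    · intro d hd
      rw [hG] at hd
      rw [hL]
      simp only [Finset.mem_filter] at hd ⊢
      refine ⟨?_, ?_⟩
      · rw [hs, MvPolynomial.mem_support_iff] at hd ⊢
        rw [hcoeff]; exact hd.1
      · rw [hswap, hswap, Equiv.swap_apply_left, Equiv.swap_apply_right]
        exact hd.2
    · intro d _; exact hinv d
    · intro d _; exact hinv d
    · intro d hd
      rw [hinv d, hcoeff d]
  -- the key two-variable identity
  have key : ∀ (p q : ℕ), q < p → ∀ (c : ℤ) (R : MvPolynomial (Fin N) ℤ), R ∈ Ad →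
      C c * (X a ^ p * (X b ^ q * R)) + C c * (X a ^ q * (X b ^ p * R)) ∈ Ad := by
    intro p q hpq c R hRmem
    obtain ⟨e, rfl⟩ : ∃ e, p = q + e := ⟨p - q, by omega⟩
    have e1 : (C c : MvPolynomial (Fin N) ℤ) * (X a ^ (q + e) * (X b ^ q * R))
        + C c * (X a ^ q * (X b ^ (q + e) * R))
        = (C c * ((X a * X b) ^ q * R)) * (X a ^ e + X b ^ e) := by ring
    rw [e1]
    exact mul_mem (mul_mem (hC c) (mul_mem (pow_mem hprod q) hRmem)) (hS e)
  have hEmem : ∀ d ∈ E, (monomial d (coeff d F) : MvPolynomial (Fin N) ℤ) ∈ Ad := by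
    intro d hd
    rw [hE] at hd
    obtain ⟨_, hdab⟩ := Finset.mem_filter.mp hd
    rw [hmono]
    have e2 : (X a : MvPolynomial (Fin N) ℤ) ^ d a * (X b ^ d b * ∏ k ∈ rest, X k ^ d k)
        = (X a * X b) ^ d a * ∏ k ∈ rest, X k ^ d k := by
      rw [← hdab]; ring
    rw [e2]
    exact mul_mem (hC _) (mul_mem (pow_mem hprod _) (hR d))
  have hGmem : ∀ d ∈ G, (monomial d (coeff d F) : MvPolynomial (Fin N) ℤ)
      + (monomial (Finsupp.mapDomain (⇑(Equiv.swap a b)) d) (coeff d F)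
          : MvPolynomial (Fin N) ℤ) ∈ Ad := by
    intro d hd
    rw [hG] at hd
    obtain ⟨_, hdab⟩ := Finset.mem_filter.mp hd
    rw [hmono, hmono]
    have hrearr : (∏ k ∈ rest, (X k : MvPolynomial (Fin N) ℤ)
          ^ (Finsupp.mapDomain (⇑(Equiv.swap a b)) d) k)
        = ∏ k ∈ rest, (X k : MvPolynomial (Fin N) ℤ) ^ d k :=
      Finset.prod_congr rfl fun k hk => by
        rw [hswap, Equiv.swap_apply_of_ne_of_ne (hrestmem k hk).1 (hrestmem k hk).2]
    rw [hrearr, hswap d a, hswap d b, Equiv.swap_apply_left, Equiv.swap_apply_right]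
    exact key (d a) (d b) hdab (coeff d F) _ (hR d)
  rw [hFrepr, hLG, ← Finset.sum_add_distrib]
  exact add_mem (sum_mem fun d hd => hEmem d hd) (sum_mem fun d hd => hGmem d hd)

lemma mem_center_of_commute_of {G : Type*} [Group G] (x : MonoidAlgebra ℤ G)
    (hx : ∀ g : G, MonoidAlgebra.of ℤ G g * x = x * MonoidAlgebra.of ℤ G g) :
    x ∈ Set.center (MonoidAlgebra ℤ G) := by
  rw [Semigroup.mem_center_iff]
  intro a
  have key : ∀ (g : G) (c : ℤ),
      (MonoidAlgebra.single g c : MonoidAlgebra ℤ G) * x = x * MonoidAlgebra.single g c := by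
    intro g c
    have h1 : (MonoidAlgebra.single g c : MonoidAlgebra ℤ G) = c • MonoidAlgebra.of ℤ G g := by
      rw [MonoidAlgebra.of_apply, MonoidAlgebra.smul_single', mul_one]
    rw [h1, smul_mul_assoc, mul_smul_comm, hx g]
  conv_lhs => rw [← MonoidAlgebra.sum_single a]
  conv_rhs => rw [← MonoidAlgebra.sum_single a]
  rw [Finsupp.sum_mul, Finsupp.mul_sum]
  exact Finsupp.sum_congr fun g _ => key g _

lemma mclosure_adj (n : ℕ) :
    Submonoid.closure {σ : Equiv.Perm (Fin n) |
        ∃ i k : Fin n, i < k ∧ (k : ℕ) = (i : ℕ) + 1 ∧ σ = Equiv.swap i k} = ⊤ := by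
  cases n with
  | zero =>
    rw [eq_top_iff]
    intro g _
    have hg : g = 1 := by
      ext x
      exact x.elim0
    rw [hg]
    exact Submonoid.one_mem _
  | succ m =>
    rw [eq_top_iff, ← Equiv.Perm.mclosure_swap_castSucc_succ m]
    apply Submonoid.closure_mono
    rintro _ ⟨i, rfl⟩
    exact ⟨i.castSucc, i.succ, Fin.castSucc_lt_succ, by simp, rfl⟩

end JucysAux

open JucysAux

theorem symmetric_jucysMurphy_mem_center (n : ℕ) (F : MvPolynomial (Fin n) ℤ)
    (hF : F.IsSymmetric) :
    mvEval F (JM n) ∈ Set.center (MonoidAlgebra ℤ (Equiv.Perm (Fin n))) := by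
  classical
  have hcomm : ∀ x ∈ Set.range (JM n), ∀ y ∈ Set.range (JM n), x * y = y * x := by
    rintro _ ⟨i, rfl⟩ _ ⟨j, rfl⟩
    exact JM_commute i j
  letI : CommRing (Algebra.adjoin ℤ (Set.range (JM n))) := Algebra.adjoinCommRingOfComm ℤ hcomm
  let S : Subalgebra ℤ (MonoidAlgebra ℤ (Equiv.Perm (Fin n))) := Algebra.adjoin ℤ (Set.range (JM n))
  let J' : Fin n → S := fun i => ⟨JM n i, Algebra.subset_adjoin ⟨i, rfl⟩⟩
  let ψ : MvPolynomial (Fin n) ℤ →ₐ[ℤ] MonoidAlgebra ℤ (Equiv.Perm (Fin n)) :=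
    S.val.comp (MvPolynomial.aeval J')
  have hψX : ∀ j : Fin n, ψ (MvPolynomial.X j) = JM n j := by
    intro j
    show S.val (MvPolynomial.aeval J' (MvPolynomial.X j)) = JM n j
    rw [MvPolynomial.aeval_X]
    rfl
  have hmv : mvEval F (JM n) = ψ F := by
    show mvEval F (JM n) = S.val (MvPolynomial.aeval J' F)
    rw [MvPolynomial.aeval_def, MvPolynomial.eval₂_eq', map_sum]
    simp only [mvEval, Finsupp.sum]
    refine Finset.sum_congr rfl fun d hd => ?_
    show MvPolynomial.coeff d F • ((List.finRange n).map fun i => JM n i ^ d i).prod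
        = S.val (algebraMap ℤ S (MvPolynomial.coeff d F) * ∏ i, J' i ^ d i)
    rw [map_mul, Fin.prod_univ_def, map_list_prod, List.map_map]
    have h1 : (⇑S.val ∘ fun i => J' i ^ d i) = fun i => JM n i ^ d i := by
      funext i
      show S.val (J' i ^ d i) = JM n i ^ d i
      rw [map_pow]
      rfl
    rw [h1, AlgHom.commutes, ← Algebra.smul_def]
  rw [hmv]
  apply mem_center_of_commute_of
  have hadj : ∀ i k : Fin n, i < k → (k : ℕ) = (i : ℕ) + 1 →
      MonoidAlgebra.of ℤ (Equiv.Perm (Fin n)) (Equiv.swap i k) * ψ F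
        = ψ F * MonoidAlgebra.of ℤ (Equiv.Perm (Fin n)) (Equiv.swap i k) := by
    intro i k hik hk
    set T := MonoidAlgebra.of ℤ (Equiv.Perm (Fin n)) (Equiv.swap i k) with hT
    have hle : Algebra.adjoin ℤ
        (({P : MvPolynomial (Fin n) ℤ | ∃ k', k' ≠ i ∧ k' ≠ k ∧ P = MvPolynomial.X k'}
          ∪ {MvPolynomial.X i + MvPolynomial.X k, MvPolynomial.X i * MvPolynomial.X k})
          : Set (MvPolynomial (Fin n) ℤ))
        ≤ (Subalgebra.centralizer ℤ ({T} : Set (MonoidAlgebra ℤ (Equiv.Perm (Fin n))))).comap ψ := by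
      rw [Algebra.adjoin_le_iff]
      rintro P hP
      rw [SetLike.mem_coe, Subalgebra.mem_comap, Subalgebra.mem_centralizer_iff]
      rintro t ht
      rw [Set.mem_singleton_iff] at ht
      subst ht
      rcases hP with ⟨k', h1, h2, rfl⟩ | hP
      · rw [hψX k']
        exact T_comm_JM_other hik hk h1 h2
      · rcases hP with rfl | rfl
        · rw [map_add, hψX, hψX, mul_add, add_mul, T_mul_JM_i hik hk, T_mul_JM_k hik hk]
          noncomm_ring
        · rw [map_mul, hψX, hψX]
          calc T * (JM n i * JM n k) = (T * JM n i) * JM n k := by rw [mul_assoc]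
            _ = (JM n k * T - 1) * JM n k := by rw [T_mul_JM_i hik hk]
            _ = JM n k * (T * JM n k) - JM n k := by noncomm_ring
            _ = JM n k * (JM n i * T + 1) - JM n k := by rw [T_mul_JM_k hik hk]
            _ = (JM n k * JM n i) * T := by noncomm_ring
            _ = (JM n i * JM n k) * T := by rw [(JM_commute k i).eq]
    have hFmem := symm_pair_mem_adjoin (ne_of_lt hik) (hF (Equiv.swap i k))
    have hc := (Subalgebra.mem_comap _ _ _).mp (hle hFmem)
    exact (Subalgebra.mem_centralizer_iff ℤ).mp hc T (Set.mem_singleton T)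
  intro g
  have hg : g ∈ Submonoid.closure {σ : Equiv.Perm (Fin n) |
      ∃ i k : Fin n, i < k ∧ (k : ℕ) = (i : ℕ) + 1 ∧ σ = Equiv.swap i k} :=
    (mclosure_adj n) ▸ Submonoid.mem_top g
  induction hg using Submonoid.closure_induction with
  | mem σ hσ =>
    obtain ⟨i, k, hik, hk, rfl⟩ := hσ
    exact hadj i k hik hk
  | one => rw [map_one, one_mul, mul_one]
  | mul p q _ _ hp hq => rw [map_mul, mul_assoc, hq, ← mul_assoc, hp, mul_assoc]
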